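/- Let μ be the probability measure on (0,∞) with density proportional to exp(-(ar+b)²/2) r^{p-1}, where a > 0, b ≥ 0, p ≥ 2. Then for all q > 0, μ([q r*, ∞)) ≤ p·e^{p-1}·Γ(p, q(p-1))/(p-1)^p, where r* = (-b + √(b²+4(p-1)))/(2a). -/

import Mathlib

set_option maxHeartbeats 1000000

open MeasureTheory Real Set

theorem stmt11 (a b q : ℝ) (p : ℕ) (ha : 0 < a) (hb : 0 ≤ b) (hp : 2 ≤ p) (hq : 0 < q)
    (rs : ℝ) (hrs : rs = (-b + Real.sqrt (b^2 + 4*((p:ℝ)-1))) / (2*a)) :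
    (∫ r in Set.Ioi (q * rs), Real.exp (-(a*r+b)^2/2) * r^(p-1))
        / (∫ r in Set.Ioi (0:ℝ), Real.exp (-(a*r+b)^2/2) * r^(p-1))
      ≤ p * Real.exp ((p:ℝ)-1)
        * (∫ t in Set.Ioi (q*((p:ℝ)-1)), Real.exp (-t) * t^(p-1)) / ((p:ℝ)-1)^p := by
  have hp2 : (2:ℝ) ≤ (p:ℝ) := by exact_mod_cast hp
  have hp1 : (1:ℝ) ≤ (p:ℝ) - 1 := by linarith
  have hpm : ((p - 1 : ℕ) : ℝ) = (p:ℝ) - 1 := by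
    have h1 : 1 ≤ p := by omega
    push_cast [h1]; ring
  have hpp : p - 1 + 1 = p := by omega
  have hd : 0 ≤ b^2 + 4*((p:ℝ)-1) := by nlinarith
  have hsq : Real.sqrt (b^2 + 4*((p:ℝ)-1)) ^ 2 = b^2 + 4*((p:ℝ)-1) := Real.sq_sqrt hd
  have hsqb : b < Real.sqrt (b^2 + 4*((p:ℝ)-1)) := by
    nlinarith [Real.sqrt_nonneg (b^2 + 4*((p:ℝ)-1))]
  have hrs_pos : 0 < rs := by
    rw [hrs]; apply div_pos (by linarith) (by linarith)
  have h2 : 2*a*rs = -b + Real.sqrt (b^2+4*((p:ℝ)-1)) := by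
    rw [hrs]; field_simp
  have hkey : a * rs * (a * rs + b) = (p:ℝ) - 1 := by nlinarith [hsq, h2]
  set L : ℝ := a * (a*rs + b) with hL
  have harb : 0 < a*rs + b := by nlinarith
  have hLpos : 0 < L := mul_pos ha harb
  have hLrs : L * rs = (p:ℝ) - 1 := by rw [hL]; nlinarith [hkey]
  set E : ℝ := (a*rs+b)^2/2 with hE
  set C : ℝ := Real.exp ((p:ℝ)-1 - E) with hC
  clear_value L E C
  -- tangent line bound
  have htan : ∀ r : ℝ, Real.exp (-(a*r+b)^2/2) ≤ C * Real.exp (-(L*r)) := by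
    intro r
    rw [hC, ← Real.exp_add]
    apply Real.exp_le_exp.mpr
    have := sq_nonneg (a*r - a*rs)
    rw [hE, hL]
    nlinarith [hLrs]
  -- integrability of the gamma-type integrand
  have hGamma : IntegrableOn (fun t : ℝ => Real.exp (-t) * t^(p-1)) (Ioi (0:ℝ)) := by
    have := Real.GammaIntegral_convergent (s := (p:ℝ)) (by linarith)
    have heq : ∀ t : ℝ, Real.exp (-t) * t ^ ((p:ℝ) - 1) = Real.exp (-t) * t ^ (p-1) := by
      intro t
      rw [show (p:ℝ) - 1 = ((p-1:ℕ):ℝ) from hpm.symm, Real.rpow_natCast]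
    simpa [heq] using this
  have hg0 : IntegrableOn (fun r : ℝ => Real.exp (-(L*r)) * r^(p-1)) (Ioi (0:ℝ)) := by
    have hiff := integrableOn_Ioi_comp_mul_left_iff
      (fun t : ℝ => Real.exp (-t) * t^(p-1)) (0:ℝ) hLpos
    rw [mul_zero] at hiff
    have h1 : IntegrableOn (fun x : ℝ => Real.exp (-(L*x)) * (L*x)^(p-1)) (Ioi (0:ℝ)) :=
      hiff.mpr hGamma
    have h2' : IntegrableOn (fun x : ℝ => (L^(p-1))⁻¹ * (Real.exp (-(L*x)) * (L*x)^(p-1)))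
        (Ioi (0:ℝ)) := h1.const_mul ((L^(p-1))⁻¹)
    refine IntegrableOn.congr_fun h2' ?_ measurableSet_Ioi
    intro x _
    have hnz : L ^ (p-1) ≠ 0 := pow_ne_zero _ hLpos.ne'
    show (L^(p-1))⁻¹ * (Real.exp (-(L*x)) * (L*x)^(p-1)) = Real.exp (-(L*x)) * x^(p-1)
    have heq2 : (L^(p-1))⁻¹ * (Real.exp (-(L*x)) * (L*x)^(p-1))
        = (L^(p-1))⁻¹ * L^(p-1) * (Real.exp (-(L*x)) * x^(p-1)) := by
      rw [mul_pow]; ring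
    rw [heq2, inv_mul_cancel₀ hnz, one_mul]
  -- integrability of the main integrand
  have hcont : Continuous (fun r : ℝ => Real.exp (-(a*r+b)^2/2) * r^(p-1)) := by
    fun_prop
  have hf0 : IntegrableOn (fun r : ℝ => Real.exp (-(a*r+b)^2/2) * r^(p-1)) (Ioi (0:ℝ)) := by
    apply Integrable.mono' ((hg0.const_mul C))
    · exact hcont.aestronglyMeasurable
    · filter_upwards [self_mem_ae_restrict (measurableSet_Ioi : MeasurableSet (Ioi (0:ℝ)))]
        with r hr
      have hr0 : (0:ℝ) < r := hr
      rw [Real.norm_eq_abs, abs_of_nonneg (by positivity)]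
      have := htan r
      have hrp : (0:ℝ) ≤ r^(p-1) := by positivity
      calc Real.exp (-(a*r+b)^2/2) * r^(p-1) ≤ (C * Real.exp (-(L*r))) * r^(p-1) := by
            exact mul_le_mul_of_nonneg_right this hrp
        _ = C * (Real.exp (-(L*r)) * r^(p-1)) := by ring
  have hqrs : 0 < q * rs := mul_pos hq hrs_pos
  -- numerator bound
  have hgI : IntegrableOn (fun r : ℝ => Real.exp (-(L*r)) * r^(p-1)) (Ioi (q*rs)) :=
    hg0.mono_set (Ioi_subset_Ioi hqrs.le)
  have hfI : IntegrableOn (fun r : ℝ => Real.exp (-(a*r+b)^2/2) * r^(p-1)) (Ioi (q*rs)) :=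
    hf0.mono_set (Ioi_subset_Ioi hqrs.le)
  have hNle : (∫ r in Ioi (q*rs), Real.exp (-(a*r+b)^2/2) * r^(p-1))
      ≤ C * ∫ r in Ioi (q*rs), Real.exp (-(L*r)) * r^(p-1) := by
    rw [← integral_const_mul]
    apply setIntegral_mono_on hfI (hgI.const_mul C) measurableSet_Ioi
    intro r hr
    have hr0 : (0:ℝ) < r := lt_trans hqrs hr
    have hrp : (0:ℝ) ≤ r^(p-1) := by positivity
    calc Real.exp (-(a*r+b)^2/2) * r^(p-1) ≤ (C * Real.exp (-(L*r))) * r^(p-1) :=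
          mul_le_mul_of_nonneg_right (htan r) hrp
      _ = C * (Real.exp (-(L*r)) * r^(p-1)) := by ring
  -- substitution
  have hsub : (∫ r in Ioi (q*rs), Real.exp (-(L*r)) * r^(p-1))
      = (∫ t in Ioi (q*((p:ℝ)-1)), Real.exp (-t) * t^(p-1)) / L^p := by
    have hcov := integral_comp_mul_left_Ioi
      (fun t : ℝ => Real.exp (-t) * t^(p-1)) (q*rs) hLpos
    have hqL : L * (q * rs) = q * ((p:ℝ)-1) := by rw [← hLrs]; ring
    rw [hqL] at hcov
    have hlhs : (∫ x in Ioi (q*rs), Real.exp (-(L*x)) * (L*x)^(p-1))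
        = L^(p-1) * ∫ r in Ioi (q*rs), Real.exp (-(L*r)) * r^(p-1) := by
      rw [← integral_const_mul]
      congr 1; funext x; rw [mul_pow]; ring
    rw [hlhs, smul_eq_mul] at hcov
    have hLp : L^p = L^(p-1) * L := by rw [← pow_succ, hpp]
    have hLne : L^(p-1) ≠ 0 := pow_ne_zero _ hLpos.ne'
    have hLne' : L ≠ 0 := hLpos.ne'
    rw [hLp, eq_div_iff (mul_ne_zero hLne hLne')]
    have hcov2 : L^(p-1) * (∫ r in Ioi (q*rs), Real.exp (-(L*r)) * r^(p-1))
        = L⁻¹ * ∫ t in Ioi (q*((p:ℝ)-1)), Real.exp (-t) * t^(p-1) := by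
      simpa using hcov
    field_simp at hcov2
    linear_combination hcov2
  -- denominator lower bound
  have hIoc : IntegrableOn (fun r : ℝ => Real.exp (-(a*r+b)^2/2) * r^(p-1)) (Ioc 0 rs) :=
    hf0.mono_set Ioc_subset_Ioi_self
  have hpow : (∫ r in Ioc (0:ℝ) rs, Real.exp (-E) * r^(p-1)) = Real.exp (-E) * (rs^p / p) := by
    rw [integral_const_mul, ← intervalIntegral.integral_of_le hrs_pos.le,
      integral_pow, hpp]
    rw [zero_pow (by omega : p ≠ 0), hpm]
    ring
  have hD1 : Real.exp (-E) * (rs^p / p) ≤ ∫ r in Ioi (0:ℝ), Real.exp (-(a*r+b)^2/2) * r^(p-1) := by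
    rw [← hpow]
    have step1 : (∫ r in Ioc (0:ℝ) rs, Real.exp (-E) * r^(p-1))
        ≤ ∫ r in Ioc (0:ℝ) rs, Real.exp (-(a*r+b)^2/2) * r^(p-1) := by
      have hint : IntegrableOn (fun r : ℝ => Real.exp (-E) * r^(p-1)) (Ioc (0:ℝ) rs) :=
        (continuous_const.mul (continuous_pow (p-1))).integrableOn_Ioc
      apply setIntegral_mono_on hint hIoc measurableSet_Ioc
      intro r hr
      have hr1 : 0 < r := hr.1
      have hr2 : r ≤ rs := hr.2
      have hle : Real.exp (-E) ≤ Real.exp (-(a*r+b)^2/2) := by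
        apply Real.exp_le_exp.mpr
        rw [hE]
        nlinarith [mul_nonneg (mul_nonneg ha.le (sub_nonneg.2 hr2))
          (by nlinarith : (0:ℝ) ≤ a*(rs+r)+2*b)]
      exact mul_le_mul_of_nonneg_right hle (pow_nonneg hr1.le _)
    have step2 : (∫ r in Ioc (0:ℝ) rs, Real.exp (-(a*r+b)^2/2) * r^(p-1))
        ≤ ∫ r in Ioi (0:ℝ), Real.exp (-(a*r+b)^2/2) * r^(p-1) := by
      apply setIntegral_mono_set hf0
      · filter_upwards [self_mem_ae_restrict (measurableSet_Ioi : MeasurableSet (Ioi (0:ℝ)))]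
          with r hr
        exact mul_nonneg (Real.exp_pos _).le (pow_nonneg (le_of_lt hr) _)
      · exact HasSubset.Subset.eventuallyLE Ioc_subset_Ioi_self
    linarith
  have hdlow : 0 < Real.exp (-E) * (rs^p / p) := by positivity
  have hDpos : 0 < ∫ r in Ioi (0:ℝ), Real.exp (-(a*r+b)^2/2) * r^(p-1) :=
    lt_of_lt_of_le hdlow hD1
  have hNnn : 0 ≤ ∫ r in Ioi (q*rs), Real.exp (-(a*r+b)^2/2) * r^(p-1) := by
    apply setIntegral_nonneg measurableSet_Ioi
    intro r hr
    have : (0:ℝ) < r := lt_trans hqrs hr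
    positivity
  have hGnn : 0 ≤ ∫ t in Ioi (q*((p:ℝ)-1)), Real.exp (-t) * t^(p-1) := by
    apply setIntegral_nonneg measurableSet_Ioi
    intro t ht
    have : (0:ℝ) < t := lt_of_le_of_lt (by positivity) ht
    positivity
  set N := ∫ r in Ioi (q*rs), Real.exp (-(a*r+b)^2/2) * r^(p-1) with hN
  set D := ∫ r in Ioi (0:ℝ), Real.exp (-(a*r+b)^2/2) * r^(p-1) with hDdef
  set G := ∫ t in Ioi (q*((p:ℝ)-1)), Real.exp (-t) * t^(p-1) with hG
  have hfinal : N / D ≤ (C * (G / L^p)) / (Real.exp (-E) * (rs^p / p)) := by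
    calc N / D ≤ N / (Real.exp (-E) * (rs^p / p)) :=
          div_le_div_of_nonneg_left hNnn hdlow hD1
      _ ≤ (C * (G / L^p)) / (Real.exp (-E) * (rs^p / p)) := by
          apply div_le_div_of_nonneg_right ?_ hdlow.le
          rw [hG, ← hsub, hN]; exact hNle
  refine le_trans hfinal (le_of_eq ?_)
  have hLrsP : L^p * rs^p = ((p:ℝ)-1)^p := by rw [← mul_pow, hLrs]
  have hCE : C = Real.exp ((p:ℝ)-1) * Real.exp (-E) := by
    rw [hC, ← Real.exp_add]; ring_nf
  have hpne : (p:ℝ) ≠ 0 := by positivity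
  have hexpne : Real.exp (-E) ≠ 0 := (Real.exp_pos _).ne'
  have hLne : L^p ≠ 0 := pow_ne_zero _ hLpos.ne'
  have hrsne : rs^p ≠ 0 := pow_ne_zero _ hrs_pos.ne'
  rw [hCE]
  field_simp
  linear_combination (-G) * hLrsP
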